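/- Let H = H₁ ∪ H₂ where H₁, H₂ ⊆ ℝ are disjoint, H₁ is bounded and nonempty with λ(cl(H₁)) > 0, and H₂ is compact with λ(H₂) = 0. If LAvg(H₁) exists, then LAvg(H) exists and LAvg(H) = LAvg(H₁). -/

import Mathlib

open Filter Topology MeasureTheory

/-- `Avg` of a set of reals: the integral of the identity divided by the measure. -/
noncomputable def setAvg (K : Set ℝ) : ℝ := (∫ x in K, x) / (volume K).toReal

lemma integrableOn_id_of_bounded {s : Set ℝ} (hs : Bornology.IsBounded s) :
    IntegrableOn (fun x : ℝ => x) s volume := by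
  obtain ⟨r, hr⟩ := hs.subset_closedBall 0
  exact (continuousOn_id.integrableOn_compact (isCompact_closedBall 0 r)).mono_set hr

/-- removing a compact null set `H₂` (disjoint from `H₁`, whose
closure has positive measure) does not change `LAvg`. -/
theorem lavg_union_compact_null (H₁ H₂ : Set ℝ) (hdisj : Disjoint H₁ H₂)
    (hbd : Bornology.IsBounded H₁) (hne : H₁.Nonempty)
    (hcl : 0 < volume (closure H₁)) (hcpt : IsCompact H₂) (h0 : volume H₂ = 0)
    (L : ℝ)
    (hL : Tendsto (fun δ : ℝ => setAvg (Metric.thickening δ H₁)) (𝓝[>] 0) (𝓝 L)) :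
    Tendsto (fun δ : ℝ => setAvg (Metric.thickening δ (H₁ ∪ H₂))) (𝓝[>] 0) (𝓝 L) := by
  set c : ℝ := (volume (closure H₁)).toReal with hc_def
  have hbd₂ : Bornology.IsBounded H₂ := hcpt.isBounded
  -- bounds on thickenings of radius ≤ 1
  have hT1 : Bornology.IsBounded (Metric.thickening 1 H₁) := hbd.thickening
  have hS1 : Bornology.IsBounded (Metric.thickening 1 H₂) := hbd₂.thickening
  obtain ⟨M₀, hM₀⟩ := hS1.subset_closedBall 0
  set M : ℝ := max M₀ 0 with hMdef
  have hMnn : 0 ≤ M := le_max_right _ _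
  have hM : Metric.thickening 1 H₂ ⊆ Metric.closedBall 0 M :=
    hM₀.trans (Metric.closedBall_subset_closedBall (le_max_left _ _))
  -- finiteness of closure measure
  have hcl_fin : volume (closure H₁) ≠ ⊤ := hbd.closure.measure_lt_top.ne
  have hc_pos : 0 < c := ENNReal.toReal_pos hcl.ne' hcl_fin
  -- volume of thickening of H₁ tends to volume of closure
  have hvolT : Tendsto (fun δ : ℝ => (volume (Metric.thickening δ H₁)).toReal)
      (𝓝[>] 0) (𝓝 c) := by
    have h := tendsto_measure_thickening (μ := volume) (s := H₁)
      ⟨1, one_pos, hT1.measure_lt_top.ne⟩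
    exact (ENNReal.tendsto_toReal hcl_fin).comp h
  -- volume of thickening of H₂ tends to 0
  have hvolS : Tendsto (fun δ : ℝ => (volume (Metric.thickening δ H₂)).toReal)
      (𝓝[>] 0) (𝓝 0) := by
    have h := tendsto_measure_thickening (μ := volume) (s := H₂)
      ⟨1, one_pos, hS1.measure_lt_top.ne⟩
    rw [hcpt.isClosed.closure_eq, h0] at h
    have := (ENNReal.tendsto_toReal ENNReal.zero_ne_top).comp h
    simpa [Function.comp_def] using this
  -- basic facts for small δ
  have hsmall : ∀ᶠ δ : ℝ in 𝓝[>] 0, δ ∈ Set.Ioo (0:ℝ) 1 :=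
    Ioo_mem_nhdsGT_of_mem ⟨le_refl 0, one_pos⟩
  have hTfin : ∀ δ ∈ Set.Ioo (0:ℝ) 1, volume (Metric.thickening δ H₁) ≠ ⊤ := by
    intro δ hδ
    exact ((measure_mono (Metric.thickening_mono hδ.2.le _)).trans_lt
      hT1.measure_lt_top).ne
  -- integral over T tends to L * c
  have hmne : ∀ δ ∈ Set.Ioo (0:ℝ) 1,
      (volume (Metric.thickening δ H₁)).toReal ≠ 0 := by
    intro δ hδ
    have hpos : 0 < volume (Metric.thickening δ H₁) :=
      hcl.trans_le (measure_mono (Metric.closure_subset_thickening hδ.1 H₁))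
    exact (ENNReal.toReal_pos hpos.ne' (hTfin δ hδ)).ne'
  have hintT : Tendsto (fun δ : ℝ => ∫ x in Metric.thickening δ H₁, x)
      (𝓝[>] 0) (𝓝 (L * c)) := by
    have heq : (fun δ : ℝ => setAvg (Metric.thickening δ H₁)
        * (volume (Metric.thickening δ H₁)).toReal)
        =ᶠ[𝓝[>] 0] (fun δ : ℝ => ∫ x in Metric.thickening δ H₁, x) := by
      filter_upwards [hsmall] with δ hδ
      simp [setAvg, div_mul_cancel₀ _ (hmne δ hδ)]
    exact (hL.mul hvolT).congr' heq
  -- the remainder set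
  set R : ℝ → Set ℝ := fun δ => Metric.thickening δ H₂ \ Metric.thickening δ H₁ with hR
  have hRsub : ∀ δ ∈ Set.Ioo (0:ℝ) 1, R δ ⊆ Metric.thickening 1 H₂ := by
    intro δ hδ
    exact Set.diff_subset.trans (Metric.thickening_mono hδ.2.le _)
  have hSfin : ∀ δ ∈ Set.Ioo (0:ℝ) 1, volume (Metric.thickening δ H₂) ≠ ⊤ := by
    intro δ hδ
    exact ((measure_mono (Metric.thickening_mono hδ.2.le _)).trans_lt
      hS1.measure_lt_top).ne
  have hRfin : ∀ δ ∈ Set.Ioo (0:ℝ) 1, volume (R δ) ≠ ⊤ := by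
    intro δ hδ
    exact ((measure_mono (hRsub δ hδ)).trans_lt hS1.measure_lt_top).ne
  -- volume of R tends to 0
  have hvolR : Tendsto (fun δ : ℝ => (volume (R δ)).toReal) (𝓝[>] 0) (𝓝 0) := by
    apply squeeze_zero' (g := fun δ => (volume (Metric.thickening δ H₂)).toReal)
    · filter_upwards with δ; positivity
    · filter_upwards [hsmall] with δ hδ
      exact ENNReal.toReal_mono (hSfin δ hδ) (measure_mono Set.diff_subset)
    · exact hvolS
  -- integral over R tends to 0
  have hintR : Tendsto (fun δ : ℝ => ∫ x in R δ, x) (𝓝[>] 0) (𝓝 0) := by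
    apply squeeze_zero_norm'
      (a := fun δ => M * (volume (Metric.thickening δ H₂)).toReal)
    · filter_upwards [hsmall] with δ hδ
      have hb : ∀ x ∈ R δ, ‖x‖ ≤ M := fun x hx =>
        mem_closedBall_zero_iff.mp (hM (hRsub δ hδ hx))
      have hmeas : MeasurableSet (R δ) :=
        Metric.isOpen_thickening.measurableSet.diff
          Metric.isOpen_thickening.measurableSet
      calc ‖∫ x in R δ, x‖ ≤ M * (volume (R δ)).toReal :=
            norm_setIntegral_le_of_norm_le_const (lt_top_iff_ne_top.mpr (hRfin δ hδ))
              hb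
        _ ≤ M * (volume (Metric.thickening δ H₂)).toReal :=
            mul_le_mul_of_nonneg_left
              (ENNReal.toReal_mono (hSfin δ hδ) (measure_mono Set.diff_subset)) hMnn
    · simpa using (tendsto_const_nhds (x := M)).mul hvolS
  -- eventual formula for the average on the union
  have hform : (fun δ : ℝ => setAvg (Metric.thickening δ (H₁ ∪ H₂)))
      =ᶠ[𝓝[>] 0] (fun δ : ℝ =>
        ((∫ x in Metric.thickening δ H₁, x) + ∫ x in R δ, x) /
          ((volume (Metric.thickening δ H₁)).toReal + (volume (R δ)).toReal)) := by
    filter_upwards [hsmall] with δ hδ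
    have hU : Metric.thickening δ (H₁ ∪ H₂)
        = Metric.thickening δ H₁ ∪ R δ := by
      rw [Metric.thickening_union]
      exact (Set.union_diff_self).symm
    have hmeasR : MeasurableSet (R δ) :=
      Metric.isOpen_thickening.measurableSet.diff
        Metric.isOpen_thickening.measurableSet
    have hdisjTR : Disjoint (Metric.thickening δ H₁) (R δ) :=
      disjoint_sdiff_self_right
    have hintOnT : IntegrableOn (fun x : ℝ => x) (Metric.thickening δ H₁) volume :=
      integrableOn_id_of_bounded
        (hT1.subset (Metric.thickening_mono hδ.2.le _))
    have hintOnR : IntegrableOn (fun x : ℝ => x) (R δ) volume :=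
      integrableOn_id_of_bounded (hS1.subset (hRsub δ hδ))
    have hvol : volume (Metric.thickening δ (H₁ ∪ H₂))
        = volume (Metric.thickening δ H₁) + volume (R δ) := by
      rw [hU]; exact measure_union hdisjTR hmeasR
    rw [setAvg, hU, setIntegral_union hdisjTR hmeasR hintOnT hintOnR, ← hU, hvol,
      ENNReal.toReal_add (hTfin δ hδ) (hRfin δ hδ)]
  -- conclude
  have := ((hintT.add hintR).div (hvolT.add hvolR) (by simpa using hc_pos.ne'))
  rw [add_zero, add_zero, mul_div_assoc, div_self hc_pos.ne', mul_one] at this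
  exact this.congr' hform.symm
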